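/- Let G be a finite group, H ≤ G, and N ⊴ G with gcd(|H|,|N|) = 1. Then HN ∩ [HN,G]N = (H ∩ [H,G])N. -/

import Mathlib

open Subgroup Pointwise
open scoped commutatorElement

/-- The commutator `⁅H, ⊤⁆` is a normal subgroup. -/
lemma commutator_top_normal {G : Type*} [Group G] (H : Subgroup G) :
    (⁅H, (⊤ : Subgroup G)⁆ : Subgroup G).Normal := by
  constructor
  intro x hx g
  induction hx using Subgroup.closure_induction with
  | mem y hy =>
    obtain ⟨h, hh, k, -, rfl⟩ := hy
    have hkey : g * ⁅h, k⁆ * g⁻¹ = ⁅h, g⁆⁻¹ * ⁅h, g * k⁆ := by group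
    rw [hkey]
    exact mul_mem (inv_mem (Subgroup.commutator_mem_commutator hh (Subgroup.mem_top _)))
      (Subgroup.commutator_mem_commutator hh (Subgroup.mem_top _))
  | one => simpa using one_mem _
  | mul a b _ _ ha hb =>
    have : g * (a * b) * g⁻¹ = (g * a * g⁻¹) * (g * b * g⁻¹) := by group
    rw [this]; exact mul_mem ha hb
  | inv a _ ha =>
    have : g * a⁻¹ * g⁻¹ = (g * a * g⁻¹)⁻¹ := by group
    rw [this]; exact inv_mem ha

theorem stmt_6 {G : Type*} [Group G] [Finite G] (H N : Subgroup G)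
    [N.Normal] (hcop : Nat.Coprime (Nat.card H) (Nat.card N)) :
    (H ⊔ N) ⊓ (⁅H ⊔ N, (⊤ : Subgroup G)⁆ ⊔ N) =
      (H ⊓ ⁅H, (⊤ : Subgroup G)⁆) ⊔ N := by
  set D := (⁅H, (⊤ : Subgroup G)⁆ : Subgroup G) with hDdef
  haveI hDnormal : D.Normal := commutator_top_normal H
  -- Step 1: ⁅H ⊔ N, ⊤⁆ ⊔ N = D ⊔ N
  have h1 : (⁅H ⊔ N, (⊤ : Subgroup G)⁆ : Subgroup G) ⊔ N = D ⊔ N := by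
    apply le_antisymm
    · refine sup_le ?_ le_sup_right
      rw [Subgroup.commutator_le]
      intro g₁ hg₁ g₂ _
      have hg₁' : g₁ ∈ ((H : Set G) * (N : Set G)) := by
        rw [← Subgroup.mul_normal]; exact hg₁
      obtain ⟨h, hh, n, hn, rfl⟩ := hg₁'
      have hsplit : ⁅h * n, g₂⁆ = (h * ⁅n, g₂⁆ * h⁻¹) * ⁅h, g₂⁆ := by group
      rw [hsplit]
      exact mul_mem
        (Subgroup.mem_sup_right
          (‹N.Normal›.conj_mem _ (Subgroup.commutator_le_left N ⊤
            (Subgroup.commutator_mem_commutator hn (Subgroup.mem_top _))) h))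
        (Subgroup.mem_sup_left
          (Subgroup.commutator_mem_commutator hh (Subgroup.mem_top _)))
    · exact sup_le (le_sup_of_le_left (Subgroup.commutator_mono le_sup_left le_rfl)) le_sup_right
  rw [h1]
  -- Step 2 (coprimality): H ⊓ (D ⊔ N) ≤ D
  have key : ∀ h : G, h ∈ H → h ∈ D ⊔ N → h ∈ D := by
    intro h hH hDN
    have hDN' : h ∈ ((D : Set G) * (N : Set G)) := by
      rw [← Subgroup.mul_normal]; exact hDN
    obtain ⟨d, hd, n, hn, hdn⟩ := hDN'
    set π := QuotientGroup.mk' D with hπ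
    have hπh : π h = π n := by
      have hd1 : π d = 1 := (QuotientGroup.eq_one_iff d).mpr hd
      rw [← hdn, map_mul, hd1, one_mul]
    have h1 : orderOf (π h) ∣ Nat.card H := by
      refine (orderOf_map_dvd π h).trans ?_
      have : orderOf (⟨h, hH⟩ : H) ∣ Nat.card H := orderOf_dvd_natCard _
      rwa [← Subgroup.orderOf_coe] at this
    have h2 : orderOf (π h) ∣ Nat.card N := by
      rw [hπh]
      refine (orderOf_map_dvd π n).trans ?_
      have : orderOf (⟨n, hn⟩ : N) ∣ Nat.card N := orderOf_dvd_natCard _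
      rwa [← Subgroup.orderOf_coe] at this
    have : orderOf (π h) = 1 := Nat.eq_one_of_dvd_coprimes hcop h1 h2
    have hone : π h = 1 := orderOf_eq_one_iff.mp this
    rwa [← QuotientGroup.ker_mk' D, MonoidHom.mem_ker]
  -- Step 3: combine
  apply le_antisymm
  · intro x hx
    obtain ⟨hx1, hx2⟩ := hx
    have hx1' : x ∈ ((H : Set G) * (N : Set G)) := by
      rw [← Subgroup.mul_normal]; exact hx1
    obtain ⟨h, hh, n, hn, rfl⟩ := hx1'
    have hhDN : h ∈ D ⊔ N := by
      have : h = (h * n) * n⁻¹ := by group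
      rw [this]
      exact mul_mem hx2 (Subgroup.mem_sup_right (inv_mem hn))
    exact mul_mem (Subgroup.mem_sup_left ⟨hh, key h hh hhDN⟩) (Subgroup.mem_sup_right hn)
  · exact sup_le
      (le_inf (inf_le_left.trans le_sup_left) (inf_le_right.trans le_sup_left))
      (le_inf le_sup_right le_sup_right)
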